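/- Let n be even, and for 1 ≤ j ≤ (n-2)/2 let θ_j be arbitrary reals. Define the n×n matrix A = √(2/n)·( (1/√2)𝟙_n | (1/√2)v | C | S ), where v = ((-1)^i)_{i=1}^n, C = (cos(θ_j + 2ijπ/n))_{i,j}, S = (sin(θ_j + 2ijπ/n))_{i,j} are n × (n-2)/2 matrices. Then A is an orthogonal matrix. -/

import Mathlib

open Real Matrix Complex Finset

lemma sum_exp_aux (n : ℕ) (hn : 0 < n) (K : ℤ) :
    ∑ i : Fin n, Complex.exp (2 * π * (i.1 + 1) * K / n * Complex.I) =
      if (n : ℤ) ∣ K then (n : ℂ) else 0 := by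
  have hn' : (n : ℂ) ≠ 0 := by exact_mod_cast hn.ne'
  set ζ : ℂ := Complex.exp (2 * π * K / n * Complex.I) with hζ
  have hterm : ∀ i : ℕ, Complex.exp (2 * π * ((i : ℂ) + 1) * K / n * Complex.I) = ζ ^ (i + 1) := by
    intro i
    rw [hζ, ← Complex.exp_nat_mul]
    push_cast
    ring_nf
  have hsum : ∑ i : Fin n, Complex.exp (2 * π * (i.1 + 1) * K / n * Complex.I)
      = ζ * ∑ i ∈ Finset.range n, ζ ^ i := by
    rw [Fin.sum_univ_eq_sum_range
      (fun i => Complex.exp (2 * π * ((i : ℂ) + 1) * K / n * Complex.I)) n, Finset.mul_sum]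
    refine Finset.sum_congr rfl fun i _ => ?_
    rw [hterm i, pow_succ']
  rw [hsum]
  by_cases hd : (n : ℤ) ∣ K
  · obtain ⟨t, ht⟩ := hd
    have hζ1 : ζ = 1 := by
      rw [hζ]
      have hc : (2 * π * K / n * Complex.I : ℂ) = (t : ℤ) * (2 * π * Complex.I) := by
        have hK : (K : ℂ) = (n : ℂ) * (t : ℂ) := by exact_mod_cast ht
        rw [hK]; field_simp
      rw [hc, Complex.exp_int_mul_two_pi_mul_I]
    rw [if_pos ⟨t, ht⟩]
    simp [hζ1]
  · have hζne : ζ ≠ 1 := by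
      intro h
      rw [hζ, Complex.exp_eq_one_iff] at h
      obtain ⟨t, ht⟩ := h
      apply hd
      refine ⟨t, ?_⟩
      have hπ : (π : ℂ) ≠ 0 := by exact_mod_cast Real.pi_ne_zero
      have hI := Complex.I_ne_zero
      have : (K : ℂ) = (n : ℂ) * (t : ℂ) := by
        field_simp at ht
        have h2 : (2 * π * Complex.I) * (K : ℂ) = (2 * π * Complex.I) * ((n : ℂ) * t) := by
          linear_combination (2 * π * Complex.I) * ht
        exact mul_left_cancel₀ (by simp [hπ, hI, Complex.I_ne_zero]) h2
      exact_mod_cast this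
    have hζn : ζ ^ n = 1 := by
      rw [hζ, ← Complex.exp_nat_mul]
      have hc : (n : ℂ) * (2 * π * K / n * Complex.I) = (K : ℤ) * (2 * π * Complex.I) := by
        field_simp
      rw [hc, Complex.exp_int_mul_two_pi_mul_I]
    rw [geom_sum_eq hζne, hζn, if_neg hd]
    simp

lemma re_mul_re (z z' : ℂ) :
    z.re * z'.re = ((z * z').re + (z * (starRingEnd ℂ) z').re) / 2 := by
  simp only [Complex.mul_re, Complex.conj_re, Complex.conj_im]
  ring

lemma key_sum (n : ℕ) (hn : 0 < n) (k k' : ℕ) (w w' : ℂ) (f g : Fin n → ℝ)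
    (hf : ∀ i : Fin n, f i = Real.sqrt (2 / n) *
      (w * Complex.exp (2 * π * (i.1 + 1) * k / n * Complex.I)).re)
    (hg : ∀ i : Fin n, g i = Real.sqrt (2 / n) *
      (w' * Complex.exp (2 * π * (i.1 + 1) * k' / n * Complex.I)).re) :
    ∑ i, f i * g i =
      (if (n : ℤ) ∣ ((k : ℤ) + k') then (w * w').re else 0) +
      (if (n : ℤ) ∣ ((k : ℤ) - k') then (w * (starRingEnd ℂ) w').re else 0) := by
  have hn' : (n : ℝ) ≠ 0 := by exact_mod_cast hn.ne'
  have hs : Real.sqrt (2 / n) * Real.sqrt (2 / n) = 2 / n :=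
    Real.mul_self_sqrt (by positivity)
  have hconj : ∀ x : ℝ, (starRingEnd ℂ) (Complex.exp (x * Complex.I))
      = Complex.exp (-x * Complex.I) := by
    intro x
    rw [← Complex.exp_conj]
    simp
  have hterm : ∀ i : Fin n, f i * g i = (1 / n) *
      (((w * w') * Complex.exp (2 * π * (i.1 + 1) * (((k : ℤ) + k' : ℤ) : ℂ) / n * Complex.I)).re
       + ((w * (starRingEnd ℂ) w') *
          Complex.exp (2 * π * (i.1 + 1) * (((k : ℤ) - k' : ℤ) : ℂ) / n * Complex.I)).re) := by
    intro i
    rw [hf i, hg i, mul_mul_mul_comm, hs, re_mul_re]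
    have e1 : (w * Complex.exp (2 * π * (i.1 + 1) * k / n * Complex.I)) *
        (w' * Complex.exp (2 * π * (i.1 + 1) * k' / n * Complex.I))
        = (w * w') * Complex.exp (2 * π * (i.1 + 1) * (((k : ℤ) + k' : ℤ) : ℂ) / n * Complex.I) := by
      rw [mul_mul_mul_comm, ← Complex.exp_add]
      push_cast
      ring_nf
    have e2 : (w * Complex.exp (2 * π * (i.1 + 1) * k / n * Complex.I)) *
        (starRingEnd ℂ) (w' * Complex.exp (2 * π * (i.1 + 1) * k' / n * Complex.I))
        = (w * (starRingEnd ℂ) w') *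
          Complex.exp (2 * π * (i.1 + 1) * (((k : ℤ) - k' : ℤ) : ℂ) / n * Complex.I) := by
      have hb : (2 * (π : ℂ) * (i.1 + 1) * k' / n * Complex.I)
          = ((2 * π * (i.1 + 1) * k' / n : ℝ) : ℂ) * Complex.I := by push_cast; ring
      rw [_root_.map_mul, hb, hconj, mul_mul_mul_comm, ← Complex.exp_add]
      push_cast
      ring_nf
    rw [e1, e2]
    field_simp
  rw [Finset.sum_congr rfl fun i _ => hterm i, ← Finset.mul_sum, Finset.sum_add_distrib,
    ← Complex.re_sum, ← Complex.re_sum, ← Finset.mul_sum, ← Finset.mul_sum,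
    sum_exp_aux n hn ((k : ℤ) + k'), sum_exp_aux n hn ((k : ℤ) - k')]
  split_ifs <;> simp [Complex.mul_re, hn'] <;> field_simp <;> ring

/-- For even n = 2m+2 and arbitrary phases θⱼ, the n×n matrix with columns
√(1/n)·𝟙, √(1/n)·((-1)^i)ᵢ, √(2/n)·cos(θⱼ + 2ijπ/n), √(2/n)·sin(θⱼ + 2ijπ/n)
is orthogonal. -/
theorem stmt4 (m : ℕ) (θ : Fin m → ℝ)
    (A : Matrix (Fin (2 * m + 2)) (Fin (2 * m + 2)) ℝ)
    (h0 : ∀ i, A i ⟨0, by omega⟩ = Real.sqrt (1 / (2 * m + 2)))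
    (hv : ∀ i : Fin (2 * m + 2),
      A i ⟨1, by omega⟩ = Real.sqrt (1 / (2 * m + 2)) * (-1 : ℝ) ^ (i.1 + 1))
    (hC : ∀ i : Fin (2 * m + 2), ∀ j : Fin m,
      A i ⟨j.1 + 2, by omega⟩ =
        Real.sqrt (2 / (2 * m + 2)) *
          Real.cos (θ j + 2 * (i.1 + 1) * (j.1 + 1) * Real.pi / (2 * m + 2)))
    (hS : ∀ i : Fin (2 * m + 2), ∀ j : Fin m,
      A i ⟨m + 2 + j.1, by omega⟩ =
        Real.sqrt (2 / (2 * m + 2)) *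
          Real.sin (θ j + 2 * (i.1 + 1) * (j.1 + 1) * Real.pi / (2 * m + 2))) :
    A ∈ Matrix.orthogonalGroup (Fin (2 * m + 2)) ℝ := by
  have hn : 0 < 2 * m + 2 := by omega
  -- the column spec
  have spec : ∀ c : Fin (2 * m + 2), ∃ (k : ℕ) (w : ℂ),
      (∀ i : Fin (2 * m + 2), A i c = Real.sqrt (2 / ((2 * m + 2 : ℕ) : ℝ)) *
        (w * Complex.exp (2 * π * (i.1 + 1) * k / ((2 * m + 2 : ℕ) : ℂ) * Complex.I)).re) ∧
      ((c.1 < 2 ∧ w = (((Real.sqrt 2)⁻¹ : ℝ) : ℂ) ∧ k = (m + 1) * c.1) ∨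
       (∃ j : Fin m, k = j.1 + 1 ∧
         ((c.1 = j.1 + 2 ∧ w = Complex.exp ((θ j : ℂ) * Complex.I)) ∨
          (c.1 = m + 2 + j.1 ∧ w = Complex.exp ((θ j : ℂ) * Complex.I) * (-Complex.I))))) := by
    have hNC : ((2 * m + 2 : ℕ) : ℂ) ≠ 0 := Nat.cast_ne_zero.mpr (by omega)
    have hval : Real.sqrt (2 / ((2 * m + 2 : ℕ) : ℝ)) * (Real.sqrt 2)⁻¹
        = Real.sqrt (1 / (2 * (m : ℝ) + 2)) := by
      rw [show ((Real.sqrt 2)⁻¹ : ℝ) = Real.sqrt 2⁻¹ by rw [Real.sqrt_inv],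
        ← Real.sqrt_mul (by positivity)]
      push_cast
      congr 1
      ring
    have hcosπ : ∀ jn : ℕ, Real.cos (π * jn) = (-1 : ℝ) ^ jn := by
      intro jn
      simpa [mul_comm] using Real.cos_nat_mul_pi_sub 0 jn
    rintro ⟨c, hc⟩
    rcases lt_or_ge c 2 with hc2 | hc2
    · interval_cases c
      · -- constant column
        refine ⟨0, (((Real.sqrt 2)⁻¹ : ℝ) : ℂ), fun i => ?_, Or.inl ⟨by simp, rfl, by simp⟩⟩
        rw [h0 i]
        simp only [Nat.cast_zero, mul_zero, zero_div, zero_mul, Complex.exp_zero, mul_one,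
          Complex.ofReal_re]
        exact hval.symm
      · -- alternating column
        refine ⟨m + 1, (((Real.sqrt 2)⁻¹ : ℝ) : ℂ), fun i => ?_,
          Or.inl ⟨by simp, rfl, by simp⟩⟩
        rw [hv i]
        have harg : (2 * (π : ℂ) * ((i.1 : ℂ) + 1) * ((m + 1 : ℕ) : ℂ) / ((2 * m + 2 : ℕ) : ℂ)
            * Complex.I) = ((π * (i.1 + 1) : ℝ) : ℂ) * Complex.I := by
          rw [div_mul_eq_mul_div, div_eq_iff hNC]
          push_cast
          ring
        rw [harg, Complex.re_ofReal_mul, Complex.exp_ofReal_mul_I_re,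
          show (π * ((i.1 : ℝ) + 1)) = π * ((i.1 + 1 : ℕ) : ℝ) by push_cast; ring,
          hcosπ, ← mul_assoc, hval]
    · rcases lt_or_ge c (m + 2) with hcm | hcm
      · -- cosine column
        set j : Fin m := ⟨c - 2, by omega⟩ with hj
        refine ⟨j.1 + 1, Complex.exp ((θ j : ℂ) * Complex.I), fun i => ?_,
          Or.inr ⟨j, rfl, Or.inl ⟨by simp [hj]; omega, rfl⟩⟩⟩
        have hceq : (⟨c, hc⟩ : Fin (2 * m + 2)) = ⟨j.1 + 2, by omega⟩ := by
          apply Fin.ext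
          simp [hj]
          omega
        rw [hceq, hC i j, ← Complex.exp_add]
        have harg : (θ j : ℂ) * Complex.I + 2 * (π : ℂ) * ((i.1 : ℂ) + 1) * ((j.1 + 1 : ℕ) : ℂ)
            / ((2 * m + 2 : ℕ) : ℂ) * Complex.I
            = ((θ j + 2 * (i.1 + 1) * (j.1 + 1) * π / (2 * (m : ℝ) + 2) : ℝ) : ℂ) * Complex.I := by
          push_cast
          ring
        rw [harg, Complex.exp_ofReal_mul_I_re,
          show ((2 * m + 2 : ℕ) : ℝ) = 2 * (m : ℝ) + 2 by push_cast; ring]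
      · -- sine column
        set j : Fin m := ⟨c - (m + 2), by omega⟩ with hj
        refine ⟨j.1 + 1, Complex.exp ((θ j : ℂ) * Complex.I) * (-Complex.I), fun i => ?_,
          Or.inr ⟨j, rfl, Or.inr ⟨by simp [hj]; omega, rfl⟩⟩⟩
        have hceq : (⟨c, hc⟩ : Fin (2 * m + 2)) = ⟨m + 2 + j.1, by omega⟩ := by
          apply Fin.ext
          simp [hj]
          omega
        rw [hceq, hS i j]
        have hre : (Complex.exp ((θ j : ℂ) * Complex.I) * (-Complex.I) *
            Complex.exp (2 * (π : ℂ) * ((i.1 : ℂ) + 1) * ((j.1 + 1 : ℕ) : ℂ)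
              / ((2 * m + 2 : ℕ) : ℂ) * Complex.I)).re
            = Real.sin (θ j + 2 * (i.1 + 1) * (j.1 + 1) * π / (2 * (m : ℝ) + 2)) := by
          rw [mul_right_comm, ← Complex.exp_add]
          have harg : (θ j : ℂ) * Complex.I + 2 * (π : ℂ) * ((i.1 : ℂ) + 1) * ((j.1 + 1 : ℕ) : ℂ)
              / ((2 * m + 2 : ℕ) : ℂ) * Complex.I
              = ((θ j + 2 * (i.1 + 1) * (j.1 + 1) * π / (2 * (m : ℝ) + 2) : ℝ) : ℂ) * Complex.I := by
            push_cast
            ring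
          rw [harg]
          simp only [Complex.mul_re, Complex.neg_re, Complex.neg_im, Complex.I_re, Complex.I_im,
            Complex.exp_ofReal_mul_I_im]
          ring
        rw [hre, show ((2 * m + 2 : ℕ) : ℝ) = 2 * (m : ℝ) + 2 by push_cast; ring]
  -- helpers
  have hnd : ∀ K : ℤ, K ≠ 0 → |K| < ((2 * m + 2 : ℕ) : ℤ) → ¬ (((2 * m + 2 : ℕ) : ℤ) ∣ K) :=
    fun K h1 h2 hd => h1 (Int.eq_zero_of_abs_lt_dvd hd h2)
  have hww : ((((Real.sqrt 2)⁻¹ : ℝ) : ℂ) * (((Real.sqrt 2)⁻¹ : ℝ) : ℂ)).re = 1 / 2 := by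
    rw [← Complex.ofReal_mul, Complex.ofReal_re, ← mul_inv,
      Real.mul_self_sqrt (by norm_num)]
    norm_num
  have hconjexp : ∀ x : ℝ, (starRingEnd ℂ) (Complex.exp ((x : ℂ) * Complex.I))
      = Complex.exp (-(x : ℂ) * Complex.I) := by
    intro x
    rw [← Complex.exp_conj]
    simp
  have hx1 : ∀ x : ℝ, Complex.exp ((x : ℂ) * Complex.I) * Complex.exp (-(x : ℂ) * Complex.I)
      = 1 := by
    intro x
    rw [← Complex.exp_add, show (x : ℂ) * Complex.I + -(x : ℂ) * Complex.I = 0 by ring,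
      Complex.exp_zero]
  rw [Matrix.mem_orthogonalGroup_iff']
  ext c c'
  rw [Matrix.mul_apply, Matrix.one_apply]
  obtain ⟨k, w, hf, hcase⟩ := spec c
  obtain ⟨k', w', hg, hcase'⟩ := spec c'
  have hkey := key_sum (2 * m + 2) hn k k' w w' (fun i => A i c) (fun i => A i c') hf hg
  rw [show (∑ i, Aᵀ c i * A i c') = ∑ i, A i c * A i c' from
    Finset.sum_congr rfl fun i _ => by simp [Matrix.star_apply], hkey]
  rcases hcase with ⟨hc2, hw, hk⟩ | ⟨j, hk, hjc⟩
  · rcases hcase' with ⟨hc2', hw', hk'⟩ | ⟨j', hk', hjc'⟩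
    · -- real / real
      subst hw hw'
      rcases (by omega : c.1 = 0 ∨ c.1 = 1) with h | h <;>
        rcases (by omega : c'.1 = 0 ∨ c'.1 = 1) with h' | h' <;>
        rw [h] at hk <;> rw [h'] at hk' <;> simp only [mul_zero, mul_one] at hk hk'
      · rw [if_pos (Fin.ext (by omega) : c = c'),
          if_pos (show ((2 * m + 2 : ℕ) : ℤ) ∣ ((k : ℤ) + k') by rw [hk, hk']; norm_num),
          if_pos (show ((2 * m + 2 : ℕ) : ℤ) ∣ ((k : ℤ) - k') by rw [hk, hk']; norm_num),
          Complex.conj_ofReal, hww]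
        norm_num
      · rw [if_neg (fun he => by have := congrArg Fin.val he; omega : ¬ c = c'),
          if_neg (hnd _ (by push_cast; omega) (by rw [abs_lt]; push_cast; omega)),
          if_neg (hnd _ (by push_cast; omega) (by rw [abs_lt]; push_cast; omega))]
        norm_num
      · rw [if_neg (fun he => by have := congrArg Fin.val he; omega : ¬ c = c'),
          if_neg (hnd _ (by push_cast; omega) (by rw [abs_lt]; push_cast; omega)),
          if_neg (hnd _ (by push_cast; omega) (by rw [abs_lt]; push_cast; omega))]
        norm_num
      · rw [if_pos (Fin.ext (by omega) : c = c'),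
          if_pos (show ((2 * m + 2 : ℕ) : ℤ) ∣ ((k : ℤ) + k') by
            rw [hk, hk']; exact ⟨1, by push_cast; ring⟩),
          if_pos (show ((2 * m + 2 : ℕ) : ℤ) ∣ ((k : ℤ) - k') by rw [hk, hk']; simp),
          Complex.conj_ofReal, hww]
        norm_num
    · -- real / trig
      have hj' := j'.2
      have hcne : ¬ c = c' := by
        rcases hjc' with ⟨h, _⟩ | ⟨h, _⟩ <;> (intro he; have := congrArg Fin.val he; omega)
      rcases (by omega : c.1 = 0 ∨ c.1 = 1) with h | h <;>
        rw [h] at hk <;> simp only [mul_zero, mul_one] at hk <;>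
        rw [if_neg hcne,
          if_neg (hnd _ (by push_cast; omega) (by rw [abs_lt]; push_cast; omega)),
          if_neg (hnd _ (by push_cast; omega) (by rw [abs_lt]; push_cast; omega))] <;>
        norm_num
  · have hj := j.2
    rcases hcase' with ⟨hc2', hw', hk'⟩ | ⟨j', hk', hjc'⟩
    · -- trig / real
      have hcne : ¬ c = c' := by
        rcases hjc with ⟨h, _⟩ | ⟨h, _⟩ <;> (intro he; have := congrArg Fin.val he; omega)
      rcases (by omega : c'.1 = 0 ∨ c'.1 = 1) with h' | h' <;>
        rw [h'] at hk' <;> simp only [mul_zero, mul_one] at hk' <;>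
        rw [if_neg hcne,
          if_neg (hnd _ (by push_cast; omega) (by rw [abs_lt]; push_cast; omega)),
          if_neg (hnd _ (by push_cast; omega) (by rw [abs_lt]; push_cast; omega))] <;>
        norm_num
    · -- trig / trig
      have hj' := j'.2
      rw [if_neg (hnd _ (by push_cast; omega) (by rw [abs_lt]; push_cast; omega))]
      have hval1 : ∀ x : ℝ, (Complex.exp ((x : ℂ) * Complex.I) *
          (starRingEnd ℂ) (Complex.exp ((x : ℂ) * Complex.I))).re = 1 := by
        intro x
        rw [hconjexp, hx1]
        norm_num
      have hval2 : ∀ x : ℝ, (Complex.exp ((x : ℂ) * Complex.I) *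
          (starRingEnd ℂ) (Complex.exp ((x : ℂ) * Complex.I) * -Complex.I)).re = 0 := by
        intro x
        rw [_root_.map_mul, hconjexp, show (starRingEnd ℂ) (-Complex.I) = Complex.I by simp,
          show Complex.exp ((x : ℂ) * Complex.I) *
              (Complex.exp (-(x : ℂ) * Complex.I) * Complex.I) =
            Complex.exp ((x : ℂ) * Complex.I) * Complex.exp (-(x : ℂ) * Complex.I) *
              Complex.I by ring, hx1, one_mul]
        simp
      have hval3 : ∀ x : ℝ, (Complex.exp ((x : ℂ) * Complex.I) * -Complex.I *
          (starRingEnd ℂ) (Complex.exp ((x : ℂ) * Complex.I))).re = 0 := by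
        intro x
        rw [hconjexp, show Complex.exp ((x : ℂ) * Complex.I) * -Complex.I *
            Complex.exp (-(x : ℂ) * Complex.I) =
          Complex.exp ((x : ℂ) * Complex.I) * Complex.exp (-(x : ℂ) * Complex.I) *
            -Complex.I by ring, hx1, one_mul]
        simp
      have hval4 : ∀ x : ℝ, (Complex.exp ((x : ℂ) * Complex.I) * -Complex.I *
          (starRingEnd ℂ) (Complex.exp ((x : ℂ) * Complex.I) * -Complex.I)).re = 1 := by
        intro x
        rw [_root_.map_mul, hconjexp, show (starRingEnd ℂ) (-Complex.I) = Complex.I by simp,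
          show Complex.exp ((x : ℂ) * Complex.I) * -Complex.I *
              (Complex.exp (-(x : ℂ) * Complex.I) * Complex.I) =
            Complex.exp ((x : ℂ) * Complex.I) * Complex.exp (-(x : ℂ) * Complex.I) *
              (-Complex.I * Complex.I) by ring, hx1, one_mul]
        simp
      by_cases hjj : j = j'
      · subst hjj
        rw [if_pos (show ((2 * m + 2 : ℕ) : ℤ) ∣ ((k : ℤ) - k') by rw [hk, hk']; simp)]
        rcases hjc with ⟨hc1, hw⟩ | ⟨hc1, hw⟩ <;> rcases hjc' with ⟨hc1', hw'⟩ | ⟨hc1', hw'⟩ <;>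
          subst hw hw'
        · rw [if_pos (Fin.ext (by omega) : c = c'), hval1]
          norm_num
        · rw [if_neg (fun he => by have := congrArg Fin.val he; omega : ¬ c = c'), hval2]
          norm_num
        · rw [if_neg (fun he => by have := congrArg Fin.val he; omega : ¬ c = c'), hval3]
          norm_num
        · rw [if_pos (Fin.ext (by omega) : c = c'), hval4]
          norm_num
      · have hjj' : j.1 ≠ j'.1 := fun h => hjj (Fin.ext h)
        have hcne : ¬ c = c' := by
          rcases hjc with ⟨h, _⟩ | ⟨h, _⟩ <;> rcases hjc' with ⟨h', _⟩ | ⟨h', _⟩ <;>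
            (intro he; have := congrArg Fin.val he; omega)
        rw [if_neg hcne,
          if_neg (hnd _ (by push_cast; omega) (by rw [abs_lt]; push_cast; omega))]
        norm_num
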